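/- Let N be a positive natural number, let H be a symmetric positive definite N×N real matrix, let D̃ be an N×N real matrix, let C be a symmetric positive semidefinite N×N real matrix, let ε ≥ 0, and let P be an N×N real matrix such that the baseline scheme is energy-stable: uᵀ ⬝ᵥ (H *ᵥ (P *ᵥ u)) ≤ 0 for all u ∈ ℝᴺ. Define A_D := -ε • H⁻¹ * D̃ᵀ * C * D̃. Then the augmented scheme is energy-stable: for all u ∈ ℝᴺ, uᵀ ⬝ᵥ (H *ᵥ (P *ᵥ u + A_D *ᵥ u)) ≤ 0; in particular uᵀ ⬝ᵥ (H *ᵥ (A_D *ᵥ u)) = -ε · (D̃ *ᵥ u)ᵀ ⬝ᵥ (C *ᵥ (D̃ *ᵥ u)) ≤ 0. -/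

import Mathlib

open Matrix

/-- Energy stability: augmenting an energy-stable semi-discretization with the
artificial dissipation operator `A_D = -ε • H⁻¹ * D̃ᵀ * C * D̃` acting on the
conservative variables results in an energy-stable semi-discrete scheme for a
positive semidefinite `C`. -/
theorem dissipation_energy_stable
    (N : ℕ) (hN : 0 < N)
    (H Dt C P : Matrix (Fin N) (Fin N) ℝ) (ε : ℝ) (hε : 0 ≤ ε)
    (hHsymm : Hᵀ = H)
    (hHpos : ∀ v : Fin N → ℝ, v ≠ 0 → 0 < v ⬝ᵥ (H *ᵥ v))
    (hCsymm : Cᵀ = C)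
    (hCpsd : ∀ v : Fin N → ℝ, 0 ≤ v ⬝ᵥ (C *ᵥ v))
    (hP : ∀ u : Fin N → ℝ, u ⬝ᵥ (H *ᵥ (P *ᵥ u)) ≤ 0) :
    ∀ u : Fin N → ℝ,
      u ⬝ᵥ (H *ᵥ (P *ᵥ u + ((-ε) • (H⁻¹ * Dtᵀ * C * Dt)) *ᵥ u)) ≤ 0 ∧
      u ⬝ᵥ (H *ᵥ (((-ε) • (H⁻¹ * Dtᵀ * C * Dt)) *ᵥ u))
        = -ε * ((Dt *ᵥ u) ⬝ᵥ (C *ᵥ (Dt *ᵥ u))) ∧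
      -ε * ((Dt *ᵥ u) ⬝ᵥ (C *ᵥ (Dt *ᵥ u))) ≤ 0 := by
  have hPD : H.PosDef := by
    refine Matrix.PosDef.of_dotProduct_mulVec_pos ?_ ?_
    · simpa [Matrix.IsHermitian] using hHsymm
    · intro x hx
      simpa using hHpos x hx
  have hinv : H * H⁻¹ = 1 := Matrix.mul_nonsing_inv H (isUnit_iff_ne_zero.mpr (ne_of_gt hPD.det_pos))
  intro u
  have key : u ⬝ᵥ (H *ᵥ (((-ε) • (H⁻¹ * Dtᵀ * C * Dt)) *ᵥ u))
      = -ε * ((Dt *ᵥ u) ⬝ᵥ (C *ᵥ (Dt *ᵥ u))) := by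
    rw [show H *ᵥ (((-ε) • (H⁻¹ * Dtᵀ * C * Dt)) *ᵥ u)
        = (-ε) • ((H * (H⁻¹ * Dtᵀ * C * Dt)) *ᵥ u) by
      simp [Matrix.smul_mulVec, Matrix.mulVec_smul, Matrix.mulVec_mulVec,
        Matrix.mul_assoc, Matrix.neg_mulVec, Matrix.mulVec_neg]]
    have : H * (H⁻¹ * Dtᵀ * C * Dt) = Dtᵀ * (C * Dt) := by
      rw [show H⁻¹ * Dtᵀ * C * Dt = H⁻¹ * (Dtᵀ * (C * Dt)) by
          simp [Matrix.mul_assoc],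
        ← Matrix.mul_assoc, hinv, Matrix.one_mul]
    rw [this, dotProduct_smul, ← Matrix.mulVec_mulVec, Matrix.dotProduct_mulVec u Dtᵀ,
      Matrix.vecMul_transpose, Matrix.mulVec_mulVec]
    simp [← Matrix.mulVec_mulVec]
  have hle : -ε * ((Dt *ᵥ u) ⬝ᵥ (C *ᵥ (Dt *ᵥ u))) ≤ 0 :=
    mul_nonpos_of_nonpos_of_nonneg (neg_nonpos.2 hε) (hCpsd _)
  refine ⟨?_, key, hle⟩
  rw [Matrix.mulVec_add, dotProduct_add]
  calc u ⬝ᵥ (H *ᵥ (P *ᵥ u)) + u ⬝ᵥ (H *ᵥ (((-ε) • (H⁻¹ * Dtᵀ * C * Dt)) *ᵥ u))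
      ≤ 0 + 0 := add_le_add (hP u) (key ▸ hle)
    _ = 0 := add_zero 0
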